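/- Let r ≥ 1, let δ be an integer, and set ρ̂ = (−δ/2, −δ/2 − 1, …, −δ/2 − (r−1)) ∈ ℚ^r ⊆ ℝ^r. Let λ, μ ∈ ℝ^r be weakly decreasing tuples. If μ + ρ̂ = w(λ + ρ̂) for some even signed permutation w (i.e., λ and μ are conjugate under the star action of W(D_r)), then (λ ∩ μ) + ρ̂ = w'(λ + ρ̂) for some even signed permutation w' (i.e., λ and λ ∩ μ are conjugate under the star action of W(D_r)). -/

import Mathlib

/-- `y` is obtained from `x` by an even signed permutation, i.e. `x` and `y` are
conjugate under the Weyl group `W(D_r) ⊆ W(C_r)` of signed permutations with an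
even number of sign changes (`∏ i, ε i = 1`). -/
def IsEvenSignedPermOf {r : ℕ} (x y : Fin r → ℝ) : Prop :=
  ∃ (σ : Equiv.Perm (Fin r)) (ε : Fin r → ℝ),
    (∀ i, ε i = 1 ∨ ε i = -1) ∧ (∏ i, ε i) = 1 ∧ ∀ i, y i = ε i * x (σ i)


open Finset

section Helpers

variable {r : ℕ}

/-- A nonempty family of totally-comparable finsets: lower sets in `Fin r`. -/
lemma myLower_total {S T : Finset (Fin r)}
    (hS : ∀ ⦃i j : Fin r⦄, i ≤ j → j ∈ S → i ∈ S)
    (hT : ∀ ⦃i j : Fin r⦄, i ≤ j → j ∈ T → i ∈ T) : S ⊆ T ∨ T ⊆ S := by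
  by_contra hc
  push_neg at hc
  obtain ⟨h1, h2⟩ := hc
  obtain ⟨a, haS, haT⟩ := Finset.not_subset.mp h1
  obtain ⟨b, hbT, hbS⟩ := Finset.not_subset.mp h2
  rcases le_total a b with hab | hba
  · exact haT (hT hab hbT)
  · exact hbS (hS hba haS)

lemma myUpper_total {S T : Finset (Fin r)}
    (hS : ∀ ⦃i j : Fin r⦄, i ≤ j → i ∈ S → j ∈ S)
    (hT : ∀ ⦃i j : Fin r⦄, i ≤ j → i ∈ T → j ∈ T) : S ⊆ T ∨ T ⊆ S := by
  by_contra hc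
  push_neg at hc
  obtain ⟨h1, h2⟩ := hc
  obtain ⟨a, haS, haT⟩ := Finset.not_subset.mp h1
  obtain ⟨b, hbT, hbS⟩ := Finset.not_subset.mp h2
  rcases le_total a b with hab | hba
  · exact hbS (hS hab haS)
  · exact haT (hT hba hbT)

lemma myCard_inter {S T : Finset (Fin r)} (h : S ⊆ T ∨ T ⊆ S) :
    (S ∩ T).card = min S.card T.card := by
  rcases h with h | h
  · rw [Finset.inter_eq_left.mpr h, min_eq_left (Finset.card_le_card h)]
  · rw [Finset.inter_eq_right.mpr h, min_eq_right (Finset.card_le_card h)]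

lemma myCard_union {S T : Finset (Fin r)} (h : S ⊆ T ∨ T ⊆ S) :
    (S ∪ T).card = max S.card T.card := by
  rcases h with h | h
  · rw [Finset.union_eq_right.mpr h, max_eq_right (Finset.card_le_card h)]
  · rw [Finset.union_eq_left.mpr h, max_eq_left (Finset.card_le_card h)]

end Helpers

/-- From equal multisets of values, a permutation matching the tuples. -/
lemma exists_comp_eq_of_map_eq {n : ℕ} {f g : Fin n → ℝ}
    (h : Multiset.map f Finset.univ.val = Multiset.map g Finset.univ.val) :
    ∃ σ : Equiv.Perm (Fin n), ∀ i, f i = g (σ i) := by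
  rw [Fin.univ_val_map, Fin.univ_val_map] at h
  have hperm : List.Perm (List.ofFn f) (List.ofFn g) := Multiset.coe_eq_coe.mp h
  have h1 : List.ofFn (f ∘ Tuple.sort f) = List.ofFn (g ∘ Tuple.sort g) :=
    (fun hp hs1 hs2 => List.Perm.eq_of_sortedLE hs1 hs2 hp)
      (((Tuple.sort f).ofFn_comp_perm f).trans
        (hperm.trans ((Tuple.sort g).ofFn_comp_perm g).symm))
      (Tuple.monotone_sort f).sortedLE_ofFn (Tuple.monotone_sort g).sortedLE_ofFn
  have h2 : f ∘ Tuple.sort f = g ∘ Tuple.sort g := List.ofFn_injective h1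
  refine ⟨(Tuple.sort f).symm.trans (Tuple.sort g), fun i => ?_⟩
  have := congrFun h2 ((Tuple.sort f).symm i)
  simpa using this

section CountMin

variable {r : ℕ} {x y : Fin r → ℝ}

open Classical in
lemma card_ge_min (hx : StrictAnti x) (hy : StrictAnti y) (t : ℝ) :
    (univ.filter fun i => t ≤ min (x i) (y i)).card
      = min (univ.filter fun i => t ≤ x i).card (univ.filter fun i => t ≤ y i).card := by
  rw [show (univ.filter fun i => t ≤ min (x i) (y i))
      = (univ.filter fun i => t ≤ x i) ∩ (univ.filter fun i => t ≤ y i) by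
    ext i; simp [le_min_iff]]
  refine myCard_inter (myLower_total ?_ ?_)
  · intro i j hij hj
    simp only [mem_filter, mem_univ, true_and] at *
    exact le_trans hj (hx.antitone hij)
  · intro i j hij hj
    simp only [mem_filter, mem_univ, true_and] at *
    exact le_trans hj (hy.antitone hij)

open Classical in
lemma card_gt_min (hx : StrictAnti x) (hy : StrictAnti y) (t : ℝ) :
    (univ.filter fun i => t < min (x i) (y i)).card
      = min (univ.filter fun i => t < x i).card (univ.filter fun i => t < y i).card := by
  rw [show (univ.filter fun i => t < min (x i) (y i))
      = (univ.filter fun i => t < x i) ∩ (univ.filter fun i => t < y i) by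
    ext i; simp [lt_min_iff]]
  refine myCard_inter (myLower_total ?_ ?_)
  · intro i j hij hj
    simp only [mem_filter, mem_univ, true_and] at *
    exact lt_of_lt_of_le hj (hx.antitone hij)
  · intro i j hij hj
    simp only [mem_filter, mem_univ, true_and] at *
    exact lt_of_lt_of_le hj (hy.antitone hij)

open Classical in
lemma card_le_max (hx : StrictAnti x) (hy : StrictAnti y) (t : ℝ) :
    (univ.filter fun i => min (x i) (y i) ≤ t).card
      = max (univ.filter fun i => x i ≤ t).card (univ.filter fun i => y i ≤ t).card := by
  rw [show (univ.filter fun i => min (x i) (y i) ≤ t)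
      = (univ.filter fun i => x i ≤ t) ∪ (univ.filter fun i => y i ≤ t) by
    ext i; simp [min_le_iff]]
  refine myCard_union (myUpper_total ?_ ?_)
  · intro i j hij hi
    simp only [mem_filter, mem_univ, true_and] at *
    exact le_trans (hx.antitone hij) hi
  · intro i j hij hi
    simp only [mem_filter, mem_univ, true_and] at *
    exact le_trans (hy.antitone hij) hi

open Classical in
lemma card_lt_max (hx : StrictAnti x) (hy : StrictAnti y) (t : ℝ) :
    (univ.filter fun i => min (x i) (y i) < t).card
      = max (univ.filter fun i => x i < t).card (univ.filter fun i => y i < t).card := by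
  rw [show (univ.filter fun i => min (x i) (y i) < t)
      = (univ.filter fun i => x i < t) ∪ (univ.filter fun i => y i < t) by
    ext i; simp [min_lt_iff]]
  refine myCard_union (myUpper_total ?_ ?_)
  · intro i j hij hi
    simp only [mem_filter, mem_univ, true_and] at *
    exact lt_of_le_of_lt (hx.antitone hij) hi
  · intro i j hij hi
    simp only [mem_filter, mem_univ, true_and] at *
    exact lt_of_le_of_lt (hy.antitone hij) hi

end CountMin

section Split

variable {r : ℕ}

lemma card_filter_or (p q : Fin r → Prop) [DecidablePred p] [DecidablePred q]
    (hdis : ∀ i, ¬(p i ∧ q i)) :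
    (univ.filter fun i => p i ∨ q i).card = (univ.filter p).card + (univ.filter q).card := by
  rw [Finset.filter_or, Finset.card_union_of_disjoint]
  rw [Finset.disjoint_left]
  intro i hi hj
  simp only [mem_filter, mem_univ, true_and] at hi hj
  exact hdis i ⟨hi, hj⟩

lemma card_split_ge (u : Fin r → ℝ) (t : ℝ) :
    (univ.filter fun i => t ≤ u i).card
      = (univ.filter fun i => u i = t).card + (univ.filter fun i => t < u i).card := by
  rw [show (univ.filter fun i => t ≤ u i)
      = univ.filter fun i => u i = t ∨ t < u i by
    ext i
    simp only [mem_filter, mem_univ, true_and]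
    constructor
    · exact fun h => (eq_or_lt_of_le h).imp Eq.symm id
    · rintro (h | h)
      · exact h.ge
      · exact h.le]
  exact card_filter_or _ _ (fun i ⟨h1, h2⟩ => absurd h1 (ne_of_gt h2))

lemma card_split_le (u : Fin r → ℝ) (t : ℝ) :
    (univ.filter fun i => u i ≤ t).card
      = (univ.filter fun i => u i = t).card + (univ.filter fun i => u i < t).card := by
  rw [show (univ.filter fun i => u i ≤ t)
      = univ.filter fun i => u i = t ∨ u i < t by
    ext i
    simp only [mem_filter, mem_univ, true_and]
    constructor
    · exact fun h => (eq_or_lt_of_le h).imp id id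
    · rintro (h | h)
      · exact h.le
      · exact h.le]
  exact card_filter_or _ _ (fun i ⟨h1, h2⟩ => absurd h1 (ne_of_lt h2))

lemma card_abs_ge (u : Fin r → ℝ) (t : ℝ) (ht : 0 < t) :
    (univ.filter fun i => t ≤ |u i|).card
      = (univ.filter fun i => t ≤ u i).card + (univ.filter fun i => u i ≤ -t).card := by
  rw [show (univ.filter fun i => t ≤ |u i|)
      = univ.filter fun i => t ≤ u i ∨ u i ≤ -t by
    ext i
    simp only [mem_filter, mem_univ, true_and, le_abs]
    constructor
    · rintro (h | h)
      · exact Or.inl h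
      · exact Or.inr (by linarith)
    · rintro (h | h)
      · exact Or.inl h
      · exact Or.inr (by linarith)]
  exact card_filter_or _ _ (fun i ⟨h1, h2⟩ => by linarith)

lemma card_abs_gt (u : Fin r → ℝ) (t : ℝ) (ht : 0 ≤ t) :
    (univ.filter fun i => t < |u i|).card
      = (univ.filter fun i => t < u i).card + (univ.filter fun i => u i < -t).card := by
  rw [show (univ.filter fun i => t < |u i|)
      = univ.filter fun i => t < u i ∨ u i < -t by
    ext i
    simp only [mem_filter, mem_univ, true_and, lt_abs]
    constructor
    · rintro (h | h)
      · exact Or.inl h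
      · exact Or.inr (by linarith)
    · rintro (h | h)
      · exact Or.inl h
      · exact Or.inr (by linarith)]
  exact card_filter_or _ _ (fun i ⟨h1, h2⟩ => by linarith)

lemma card_abs_eq (u : Fin r → ℝ) (a : ℝ) (ha : 0 < a) :
    (univ.filter fun i => a = |u i|).card
      = (univ.filter fun i => u i = a).card + (univ.filter fun i => u i = -a).card := by
  rw [show (univ.filter fun i => a = |u i|)
      = univ.filter fun i => u i = a ∨ u i = -a by
    ext i
    simp only [mem_filter, mem_univ, true_and]
    rw [eq_comm, abs_eq ha.le]]
  exact card_filter_or _ _ (fun i ⟨h1, h2⟩ => by rw [h1] at h2; linarith)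

lemma card_filter_comp (f : Fin r → ℝ) (p : ℝ → Prop) [DecidablePred p] :
    (univ.filter fun i => p (f i)).card = Multiset.countP p (Multiset.map f univ.val) := by
  rw [Multiset.countP_map, Finset.card_def, Finset.filter_val]

end Split

lemma abs_min_map_eq {r : ℕ} {x y : Fin r → ℝ} (hx : StrictAnti x) (hy : StrictAnti y)
    (hM : Multiset.map (fun i => |y i|) Finset.univ.val
        = Multiset.map (fun i => |x i|) Finset.univ.val) :
    Multiset.map (fun i => |min (x i) (y i)|) Finset.univ.val
        = Multiset.map (fun i => |x i|) Finset.univ.val := by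
  have hcnt : ∀ (p : ℝ → Prop) (_ : DecidablePred p),
      (univ.filter fun i => p (|y i|)).card = (univ.filter fun i => p (|x i|)).card := by
    intro p _
    rw [card_filter_comp, card_filter_comp, hM]
  have base : ∀ a : ℝ,
      (univ.filter fun i => a = |min (x i) (y i)|).card
        = (univ.filter fun i => a = |x i|).card := by
    intro a
    rcases lt_trichotomy a 0 with ha | ha | ha
    · have e1 : ∀ u : Fin r → ℝ, (univ.filter fun i => a = |u i|) = ∅ := by
        intro u
        refine Finset.filter_eq_empty_iff.mpr fun i _ hEq => ?_
        have h2 := abs_nonneg (u i)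
        rw [← hEq] at h2
        linarith
      rw [e1 (fun i => min (x i) (y i)), e1 x]
    · subst ha
      have e0 : ∀ u : Fin r → ℝ,
          (univ.filter fun i => (0:ℝ) = |u i|).card
            + (univ.filter fun i => (0:ℝ) < |u i|).card = r := by
        intro u
        have h1 := Finset.card_filter_add_card_filter_not (s := (univ : Finset (Fin r)))
          (p := fun i => (0:ℝ) = |u i|)
        rw [Finset.card_univ, Fintype.card_fin] at h1
        have h2 : (univ.filter fun i => ¬((0:ℝ) = |u i|)) = univ.filter fun i => (0:ℝ) < |u i| := by
          ext i
          simp only [mem_filter, mem_univ, true_and]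
          constructor
          · intro hne
            exact lt_of_le_of_ne (abs_nonneg (u i)) hne
          · intro hlt hEq
            rw [← hEq] at hlt
            exact lt_irrefl 0 hlt
        rw [h2] at h1
        exact h1
      have pz := e0 (fun i => min (x i) (y i))
      have px := e0 x
      have dz : (univ.filter fun i => (0:ℝ) < |min (x i) (y i)|).card
          = (univ.filter fun i => (0:ℝ) < min (x i) (y i)).card
            + (univ.filter fun i => min (x i) (y i) < -(0:ℝ)).card :=
        card_abs_gt (fun i => min (x i) (y i)) 0 le_rfl
      have dx : (univ.filter fun i => (0:ℝ) < |x i|).card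
          = (univ.filter fun i => (0:ℝ) < x i).card
            + (univ.filter fun i => x i < -(0:ℝ)).card := card_abs_gt x 0 le_rfl
      have dy : (univ.filter fun i => (0:ℝ) < |y i|).card
          = (univ.filter fun i => (0:ℝ) < y i).card
            + (univ.filter fun i => y i < -(0:ℝ)).card := card_abs_gt y 0 le_rfl
      simp only [neg_zero] at dz dx dy
      have m1 : (univ.filter fun i => (0:ℝ) < min (x i) (y i)).card
          = min (univ.filter fun i => (0:ℝ) < x i).card
              (univ.filter fun i => (0:ℝ) < y i).card := card_gt_min hx hy 0
      have m2 : (univ.filter fun i => min (x i) (y i) < (0:ℝ)).card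
          = max (univ.filter fun i => x i < (0:ℝ)).card
              (univ.filter fun i => y i < (0:ℝ)).card := card_lt_max hx hy 0
      have t1 : (univ.filter fun i => (0:ℝ) < |y i|).card
          = (univ.filter fun i => (0:ℝ) < |x i|).card := hcnt (fun v => (0:ℝ) < v) inferInstance
      omega
    · have ez : (univ.filter fun i => a = |min (x i) (y i)|).card
          = (univ.filter fun i => min (x i) (y i) = a).card
            + (univ.filter fun i => min (x i) (y i) = -a).card :=
        card_abs_eq (fun i => min (x i) (y i)) a ha
      have ex : (univ.filter fun i => a = |x i|).card
          = (univ.filter fun i => x i = a).card + (univ.filter fun i => x i = -a).card :=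
        card_abs_eq x a ha
      have sz1 : (univ.filter fun i => a ≤ min (x i) (y i)).card
          = (univ.filter fun i => min (x i) (y i) = a).card
            + (univ.filter fun i => a < min (x i) (y i)).card :=
        card_split_ge (fun i => min (x i) (y i)) a
      have sx1 : (univ.filter fun i => a ≤ x i).card
          = (univ.filter fun i => x i = a).card + (univ.filter fun i => a < x i).card :=
        card_split_ge x a
      have sz2 : (univ.filter fun i => min (x i) (y i) ≤ -a).card
          = (univ.filter fun i => min (x i) (y i) = -a).card
            + (univ.filter fun i => min (x i) (y i) < -a).card :=
        card_split_le (fun i => min (x i) (y i)) (-a)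
      have sx2 : (univ.filter fun i => x i ≤ -a).card
          = (univ.filter fun i => x i = -a).card + (univ.filter fun i => x i < -a).card :=
        card_split_le x (-a)
      have m1 : (univ.filter fun i => a ≤ min (x i) (y i)).card
          = min (univ.filter fun i => a ≤ x i).card (univ.filter fun i => a ≤ y i).card :=
        card_ge_min hx hy a
      have m2 : (univ.filter fun i => a < min (x i) (y i)).card
          = min (univ.filter fun i => a < x i).card (univ.filter fun i => a < y i).card :=
        card_gt_min hx hy a
      have m3 : (univ.filter fun i => min (x i) (y i) ≤ -a).card
          = max (univ.filter fun i => x i ≤ -a).card (univ.filter fun i => y i ≤ -a).card :=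
        card_le_max hx hy (-a)
      have m4 : (univ.filter fun i => min (x i) (y i) < -a).card
          = max (univ.filter fun i => x i < -a).card (univ.filter fun i => y i < -a).card :=
        card_lt_max hx hy (-a)
      have t1 : (univ.filter fun i => a ≤ |y i|).card = (univ.filter fun i => a ≤ |x i|).card :=
        hcnt (fun v => a ≤ v) inferInstance
      have t2 : (univ.filter fun i => a < |y i|).card = (univ.filter fun i => a < |x i|).card :=
        hcnt (fun v => a < v) inferInstance
      have dX : (univ.filter fun i => a ≤ |x i|).card
          = (univ.filter fun i => a ≤ x i).card + (univ.filter fun i => x i ≤ -a).card :=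
        card_abs_ge x a ha
      have dY : (univ.filter fun i => a ≤ |y i|).card
          = (univ.filter fun i => a ≤ y i).card + (univ.filter fun i => y i ≤ -a).card :=
        card_abs_ge y a ha
      have dX' : (univ.filter fun i => a < |x i|).card
          = (univ.filter fun i => a < x i).card + (univ.filter fun i => x i < -a).card :=
        card_abs_gt x a ha.le
      have dY' : (univ.filter fun i => a < |y i|).card
          = (univ.filter fun i => a < y i).card + (univ.filter fun i => y i < -a).card :=
        card_abs_gt y a ha.le
      omega
  refine Multiset.ext.mpr fun a => ?_
  rw [Multiset.count_map, Multiset.count_map]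
  simpa [Finset.card_def, Finset.filter_val] using base a

lemma prod_pm {r : ℕ} {s : Finset (Fin r)} {f : Fin r → ℝ}
    (hf : ∀ i ∈ s, f i = 1 ∨ f i = -1) :
    (∏ i ∈ s, f i) = 1 ∨ (∏ i ∈ s, f i) = -1 :=
  Finset.prod_induction f (fun v => v = 1 ∨ v = -1)
    (by rintro a b (ha | ha) (hb | hb) <;> rw [ha, hb] <;> norm_num)
    (Or.inl rfl) hf

lemma prod_eq_sign_mul_abs {r : ℕ} (u : Fin r → ℝ) :
    ∏ i, u i = (-1) ^ (univ.filter fun i => u i < 0).card * ∏ i, |u i| := by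
  classical
  rw [← Finset.prod_filter_mul_prod_filter_not univ (fun i => u i < 0) u,
      ← Finset.prod_filter_mul_prod_filter_not univ (fun i => u i < 0) (fun i => |u i|)]
  have h1 : (∏ i ∈ univ.filter (fun i => u i < 0), u i)
      = (-1) ^ (univ.filter fun i => u i < 0).card
        * ∏ i ∈ univ.filter (fun i => u i < 0), |u i| := by
    rw [← Finset.prod_const, ← Finset.prod_mul_distrib]
    refine Finset.prod_congr rfl fun i hi => ?_
    rw [abs_of_neg (Finset.mem_filter.mp hi).2]
    ring
  have h2 : (∏ i ∈ univ.filter (fun i => ¬ u i < 0), u i)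
      = ∏ i ∈ univ.filter (fun i => ¬ u i < 0), |u i| := by
    refine Finset.prod_congr rfl fun i hi => ?_
    rw [abs_of_nonneg (not_lt.mp (Finset.mem_filter.mp hi).2)]
  rw [h1, h2]
  ring

lemma key {r : ℕ} {x y : Fin r → ℝ} (hx : StrictAnti x) (hy : StrictAnti y)
    (h : IsEvenSignedPermOf x y) :
    IsEvenSignedPermOf x (fun i => min (x i) (y i)) := by
  classical
  obtain ⟨σ, ε, hε, hprod, hyx⟩ := h
  have habs : ∀ i, |y i| = |x (σ i)| := by
    intro i
    rw [hyx i, abs_mul]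
    rcases hε i with h1 | h1 <;> rw [h1] <;> simp
  have hMy : Multiset.map (fun i => |y i|) Finset.univ.val
      = Multiset.map (fun i => |x i|) Finset.univ.val := by
    have he : (fun i => |y i|) = (fun i => |x i|) ∘ σ := funext fun i => habs i
    rw [he, ← Multiset.map_map, Multiset.map_univ_val_equiv]
  have hMz := abs_min_map_eq hx hy hMy
  obtain ⟨σ', habs'⟩ := exists_comp_eq_of_map_eq hMz
  -- habs' : ∀ i, |min (x i) (y i)| = |x (σ' i)|
  have hprodxy : ∏ i, y i = ∏ i, x i := by
    calc ∏ i, y i = ∏ i, ε i * x (σ i) := Finset.prod_congr rfl fun i _ => hyx i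
    _ = (∏ i, ε i) * ∏ i, x (σ i) := Finset.prod_mul_distrib
    _ = ∏ i, x i := by rw [hprod, one_mul, Equiv.prod_comp]
  have habsz : (∏ i, |min (x i) (y i)|) = ∏ i, |x i| := by
    calc (∏ i, |min (x i) (y i)|) = ∏ i, |x (σ' i)| :=
          Finset.prod_congr rfl fun i _ => habs' i
    _ = ∏ i, |x i| := Equiv.prod_comp σ' (fun j => |x j|)
  have habsy : (∏ i, |y i|) = ∏ i, |x i| := by
    calc (∏ i, |y i|) = ∏ i, |x (σ i)| := Finset.prod_congr rfl fun i _ => habs i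
    _ = ∏ i, |x i| := Equiv.prod_comp σ (fun j => |x j|)
  by_cases h0 : ∃ i, x i = 0
  · -- x has a (unique) zero entry; the sign there is free
    obtain ⟨i0, hi0⟩ := h0
    set i1 : Fin r := σ'.symm i0 with hi1
    have hz1 : min (x i1) (y i1) = 0 := by
      have := habs' i1
      rw [hi1, Equiv.apply_symm_apply, hi0, abs_zero, abs_eq_zero] at this
      exact this
    have hne : ∀ i, i ≠ i1 → x (σ' i) ≠ 0 := by
      intro i hi hEq
      apply hi
      have : σ' i = i0 := hx.injective (hEq.trans hi0.symm)
      rw [hi1, ← this, Equiv.symm_apply_apply]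
    set c : ℝ := ∏ i ∈ univ.erase i1, (min (x i) (y i) / x (σ' i)) with hc
    have hpm : ∀ i, i ≠ i1 → (min (x i) (y i) / x (σ' i) = 1 ∨ min (x i) (y i) / x (σ' i) = -1) := by
      intro i hi
      rcases abs_eq_abs.mp (habs' i) with h1 | h1
      · left; rw [h1]; exact div_self (hne i hi)
      · right; rw [h1, neg_div, div_self (hne i hi)]
    have hcpm : c = 1 ∨ c = -1 := by
      rw [hc]
      exact prod_pm fun i hi => hpm i (Finset.mem_erase.mp hi).1
    refine ⟨σ', fun i => if i = i1 then c else min (x i) (y i) / x (σ' i), ?_, ?_, ?_⟩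
    · intro i
      beta_reduce
      by_cases hi : i = i1
      · rw [if_pos hi]; exact hcpm
      · rw [if_neg hi]; exact hpm i hi
    · rw [← Finset.mul_prod_erase univ _ (Finset.mem_univ i1), if_pos rfl]
      have he2 : (∏ i ∈ univ.erase i1,
          (if i = i1 then c else min (x i) (y i) / x (σ' i))) = c := by
        rw [hc]
        exact Finset.prod_congr rfl fun i hi => if_neg (Finset.mem_erase.mp hi).1
      rw [he2]
      rcases hcpm with h1 | h1 <;> rw [h1] <;> norm_num
    · intro i
      beta_reduce
      by_cases hi : i = i1
      · subst hi
        rw [if_pos rfl, hi1, Equiv.apply_symm_apply, hi0, mul_zero]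
        exact hz1
      · rw [if_neg hi]
        exact (div_mul_cancel₀ _ (hne i hi)).symm
  · -- no zero entry: use the parity of negative entries
    push_neg at h0
    have hprodx : (∏ i, x i) ≠ 0 := Finset.prod_ne_zero_iff.mpr fun i _ => h0 i
    have hzx : ∏ i, min (x i) (y i) = ∏ i, x i := by
      have hnz : (univ.filter fun i => min (x i) (y i) < 0).card
          = max (univ.filter fun i => x i < 0).card (univ.filter fun i => y i < 0).card :=
        card_lt_max hx hy 0
      rcases max_choice (univ.filter fun i => x i < 0).card
          (univ.filter fun i => y i < 0).card with hm | hm <;>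
        rw [hm] at hnz
      · rw [prod_eq_sign_mul_abs (fun i => min (x i) (y i)), hnz, habsz,
          ← prod_eq_sign_mul_abs x]
      · rw [prod_eq_sign_mul_abs (fun i => min (x i) (y i)), hnz, habsz, ← habsy,
          ← prod_eq_sign_mul_abs y, hprodxy]
    refine ⟨σ', fun i => min (x i) (y i) / x (σ' i), ?_, ?_, ?_⟩
    · intro i
      beta_reduce
      rcases abs_eq_abs.mp (habs' i) with h1 | h1
      · left; rw [h1]; exact div_self (h0 _)
      · right; rw [h1, neg_div, div_self (h0 _)]
    · rw [Finset.prod_div_distrib, Equiv.prod_comp σ' x, hzx]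
      exact div_self hprodx
    · intro i
      exact (div_mul_cancel₀ _ (h0 _)).symm


/-- Let `δ ∈ ℤ` and `ρ̂ = (−δ/2, −δ/2−1, …, −δ/2−(r−1))`.  If
`λ, μ ∈ ℝ^r` are weakly decreasing and conjugate under the star action of
`W(D_r)` (i.e. `μ + ρ̂ = w(λ + ρ̂)` for an even signed permutation `w`), then
`λ` and the pointwise minimum `λ ∩ μ` are conjugate under the star action of
`W(D_r)`. -/
theorem stmt6 (r : ℕ) (hr : 1 ≤ r) (δ : ℤ) (lam mu : Fin r → ℝ)
    (hlam : Antitone lam) (hmu : Antitone mu)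
    (h : IsEvenSignedPermOf (fun i => lam i + (-(δ : ℝ)/2 - (i : ℕ)))
          (fun i => mu i + (-(δ : ℝ)/2 - (i : ℕ)))) :
    IsEvenSignedPermOf (fun i => lam i + (-(δ : ℝ)/2 - (i : ℕ)))
      (fun i => min (lam i) (mu i) + (-(δ : ℝ)/2 - (i : ℕ))) := by
  have hx : StrictAnti (fun i : Fin r => lam i + (-(δ : ℝ)/2 - (i : ℕ))) := by
    intro i j hij
    have h1 : lam j ≤ lam i := hlam hij.le
    have h2 : ((i : ℕ) : ℝ) < ((j : ℕ) : ℝ) := by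
      exact_mod_cast (Fin.lt_iff_val_lt_val.mp hij)
    simp only
    linarith
  have hy : StrictAnti (fun i : Fin r => mu i + (-(δ : ℝ)/2 - (i : ℕ))) := by
    intro i j hij
    have h1 : mu j ≤ mu i := hmu hij.le
    have h2 : ((i : ℕ) : ℝ) < ((j : ℕ) : ℝ) := by
      exact_mod_cast (Fin.lt_iff_val_lt_val.mp hij)
    simp only
    linarith
  have hk := key hx hy h
  have hfun : (fun i : Fin r =>
        min ((fun i : Fin r => lam i + (-(δ : ℝ)/2 - (i : ℕ))) i)
            ((fun i : Fin r => mu i + (-(δ : ℝ)/2 - (i : ℕ))) i))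
      = fun i : Fin r => min (lam i) (mu i) + (-(δ : ℝ)/2 - (i : ℕ)) := by
    funext i
    exact min_add_add_right _ _ _
  rw [← hfun]
  exact hk
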